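/- arXiv:1511.06048 — 2 statements merged into one kernel-verified Lean document; each statement's English description precedes it below -/
import Mathlib

section
/- Let L be a first-order language all of whose symbols are function symbols of arity ≥ 1, having at least one function symbol, and let 𝒜 be an orderly L-algebra. If 𝒜 is one-to-one (injective as a function on orderly terms), then 𝒜 is not weakly Ramsey (and hence not Ramsey). -/
open Function Set

universe u v w

/-- Terms of a purely functional first-order language whose function symbols
of arity `n` form the type `F n`, with variables indexed by `ℕ`. -/
inductive Tm (F : ℕ → Type u) : Type u
  | var : ℕ → Tm F
  | func : {n : ℕ} → F n → (Fin n → Tm F) → Tm F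

namespace Tm

variable {F : ℕ → Type u} {A : Type v} {β : Type w}

/-- The list of (indices of) variables occurring in a term, from left to right. -/
def varList : Tm F → List ℕ
  | .var i => [i]
  | .func (n := n) _ ts => (List.finRange n).flatMap fun i => (ts i).varList

/-- A term is *orderly* if the indices of the variables occurring in it,
read from left to right, are strictly increasing. -/
def Orderly (t : Tm F) : Prop := t.varList.Chain' (· < ·)

/-- `TermLT s t` iff the index of the last variable of `s` is less than the
index of the first variable of `t`. -/
def TermLT (s t : Tm F) : Prop :=
  ∃ i j, s.varList.getLast? = some i ∧ t.varList.head? = some j ∧ i < j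

/-- An infinite sequence of orderly terms is *admissible* iff it is increasing
with respect to `TermLT`. -/
def Admissible (ts : ℕ → Tm F) : Prop :=
  (∀ i, (ts i).Orderly) ∧ ∀ i, TermLT (ts i) (ts (i + 1))

/-- `s.subst σ` replaces each variable `vᵢ` in `s` by `σ i`. -/
def subst (σ : ℕ → Tm F) : Tm F → Tm F
  | .var i => σ i
  | .func f ts => .func f fun i => (ts i).subst σ

/-- Interpretation of a term in a structure with underlying set `A` whose
interpretation of the function symbols is `I`, under the assignment `a`. -/
def realize (I : ∀ n, F n → (Fin n → A) → A) (a : ℕ → A) : Tm F → A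
  | .var i => a i
  | .func (n := n) f ts => I n f fun i => (ts i).realize I a

end Tm

section General

variable {F : ℕ → Type u} {A : Type v} {β : Type w}

/-- `b` is a reduction of `a` (with respect to the algebra `(A, I)`). -/
def SeqReduction (I : ∀ n, F n → (Fin n → A) → A) (b a : ℕ → A) : Prop :=
  ∃ ts : ℕ → Tm F, Tm.Admissible ts ∧ ∀ i, b i = (ts i).realize I a

/-- The set of finite reductions of `a`. -/
def FR (I : ∀ n, F n → (Fin n → A) → A) (a : ℕ → A) : Set A :=
  { x | ∃ t : Tm F, t.Orderly ∧ x = t.realize I a }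

/-- `(A, I)` is a Ramsey algebra. -/
def RamseyAlg (I : ∀ n, F n → (Fin n → A) → A) : Prop :=
  ∀ (a : ℕ → A) (X : Set A),
    ∃ b, SeqReduction I b a ∧ (FR I b ⊆ X ∨ FR I b ∩ X = ∅)

/-- `(A, I)` is Ramsey below `a`. -/
def RamseyBelow (I : ∀ n, F n → (Fin n → A) → A) (a : ℕ → A) : Prop :=
  ∀ b, SeqReduction I b a → ∀ X : Set A,
    ∃ c, SeqReduction I c b ∧ (FR I c ⊆ X ∨ FR I c ∩ X = ∅)

/-- An increasing tuple `t₁ < t₂ < ⋯ < tₙ` of orderly terms. -/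
def OrdTuple {n : ℕ} (t : Fin n → Tm F) : Prop :=
  (∀ i, (t i).Orderly) ∧ ∀ i j : Fin n, i < j → Tm.TermLT (t i) (t j)

/-- `𝒜` (as a function on orderly terms) is an orderly algebra. -/
def IsOrderlyAlg (𝒜 : Tm F → β) : Prop :=
  ∀ (n : ℕ) (f : F n) (t t' : Fin n → Tm F), OrdTuple t → OrdTuple t' →
    (∀ k, 𝒜 (t k) = 𝒜 (t' k)) → 𝒜 (.func f t) = 𝒜 (.func f t')

/-- The universe of an orderly algebra: its range on orderly terms. -/
def OAUniv (𝒜 : Tm F → β) : Set β := 𝒜 '' { t | t.Orderly }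

/-- `ℬ` is a reduction of the orderly algebra `𝒜` (as functions on orderly terms). -/
def OAReduction (ℬ 𝒜 : Tm F → β) : Prop :=
  ∃ ts : ℕ → Tm F, Tm.Admissible ts ∧ ∀ s : Tm F, s.Orderly → ℬ s = 𝒜 (s.subst ts)

/-- `ℬ` is homogeneous for `X`. -/
def Homog (ℬ : Tm F → β) (X : Set β) : Prop :=
  OAUniv ℬ ⊆ X ∨ OAUniv ℬ ∩ X = ∅

/-- An orderly algebra is weakly Ramsey. -/
def WeaklyRamseyOA (𝒜 : Tm F → β) : Prop :=
  ∀ X ⊆ OAUniv 𝒜, ∃ ℬ, OAReduction ℬ 𝒜 ∧ Homog ℬ X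

/-- An orderly algebra is Ramsey. -/
def RamseyOA (𝒜 : Tm F → β) : Prop :=
  ∀ ℬ, OAReduction ℬ 𝒜 → ∀ X ⊆ OAUniv 𝒜, ∃ 𝒞, OAReduction 𝒞 ℬ ∧ Homog 𝒞 X

/-- The orderly algebra induced from the algebra `(A, I)` by the sequence `a`. -/
def inducedOA (I : ∀ n, F n → (Fin n → A) → A) (a : ℕ → A) : Tm F → A :=
  fun t => t.realize I a

/-- `[FR(c)]ⁿ_<` : increasing `n`-tuples of finite reductions of `c`. -/
def FRtuple (I : ∀ n, F n → (Fin n → A) → A) (n : ℕ) (c : ℕ → A) : Set (Fin n → A) :=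
  { x | ∃ t : Fin n → Tm F, OrdTuple t ∧ ∀ i, x i = (t i).realize I c }

/-- `‖𝒞‖ⁿ_<` for an orderly algebra `𝒞`. -/
def OATuple (n : ℕ) (𝒞 : Tm F → β) : Set (Fin n → β) :=
  { x | ∃ t : Fin n → Tm F, OrdTuple t ∧ ∀ i, x i = 𝒞 (t i) }

/-- The basic set `[n, a]` of the preorder with approximations `(ᵂA, ≤)`. -/
def Approx (I : ∀ n, F n → (Fin n → A) → A) (n : ℕ) (a : ℕ → A) : Set (ℕ → A) :=
  { b | SeqReduction I b a ∧ ∀ i < n, b i = a i }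

/-- The natural topology on `ᵂA`, generated by the sets `[n, a]`. -/
def natTop (I : ∀ n, F n → (Fin n → A) → A) : TopologicalSpace (ℕ → A) :=
  TopologicalSpace.generateFrom { S | ∃ n a, S = Approx I n a }

/-- A subset `X ⊆ ᵂA` is Ramsey. -/
def RamseySet (I : ∀ n, F n → (Fin n → A) → A) (X : Set (ℕ → A)) : Prop :=
  ∀ (n : ℕ) (a : ℕ → A), ∃ b ∈ Approx I n a,
    Approx I n b ⊆ X ∨ Approx I n b ∩ X = ∅

/-- `X` has the property of Baire in the natural topology:
its symmetric difference with some open set is meager. -/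
def HasBaireProperty (I : ∀ n, F n → (Fin n → A) → A) (X : Set (ℕ → A)) : Prop :=
  ∃ U : Set (ℕ → A), @IsOpen _ (natTop I) U ∧ @IsMeagre _ (natTop I) (symmDiff X U)

end General

/-- The language with a single binary function symbol. -/
inductive BinF : ℕ → Type
  | f : BinF 2

/-- Application of the binary function symbol: the term `f s t`. -/
def fapp (s t : Tm BinF) : Tm BinF := .func BinF.f ![s, t]

/-- The interpretation of the single binary function symbol by a binary
operation `g` on `A`. -/
def binI {A : Type v} (g : A → A → A) : ∀ n, BinF n → (Fin n → A) → A
  | _, BinF.f, args => g (args 0) (args 1)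

/-- The pair `(tˣ, tʸ)`: `(vᵢˣ, vᵢʸ) = (v_{2i}, v_{2i+1})` and
`((f s t)ˣ, (f s t)ʸ) = (f sˣ sʸ, f tˣ tʸ)`. -/
def xyPair : Tm BinF → Tm BinF × Tm BinF
  | .var i => (.var (2 * i), .var (2 * i + 1))
  | .func BinF.f ts =>
      (fapp (xyPair (ts 0)).1 (xyPair (ts 0)).2, fapp (xyPair (ts 1)).1 (xyPair (ts 1)).2)

/-- The orderly algebra `♯𝒜`, `♯𝒜(t) = (𝒜(tˣ), 𝒜(tʸ))`. -/
def sharpOA {β : Type w} (𝒜 : Tm BinF → β) : Tm BinF → β × β :=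
  fun t => (𝒜 (xyPair t).1, 𝒜 (xyPair t).2)
section Aux
variable {F : ℕ → Type u}

/-- Length of the leftmost branch of a term. -/
def leftLen : Tm F → ℕ
  | .var _ => 0
  | .func (n := n) _ ts => if h : 0 < n then leftLen (ts ⟨0, h⟩) + 1 else 0

lemma Tm.subst_id (t : Tm F) : t.subst (fun i => .var i) = t := by
  induction t with
  | var i => rfl
  | func f ts ih =>
    show Tm.func f _ = _
    congr 1
    funext i
    exact ih i

lemma admissible_var : Tm.Admissible (fun i => (Tm.var i : Tm F)) := by
  constructor
  · intro i; exact List.isChain_singleton _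
  · intro i; exact ⟨i, i + 1, rfl, rfl, Nat.lt_succ_self i⟩

lemma orderly_func {ts : ℕ → Tm F} (h : Tm.Admissible ts)
    {n : ℕ} (f : F n) : (Tm.func f (fun i : Fin n => ts i)).Orderly := by
  have hne : ∀ i : ℕ, (ts i).varList ≠ [] := by
    intro i hnil
    obtain ⟨a, b, ha, hb, hab⟩ := h.2 i
    rw [hnil] at ha
    simp at ha
  show ((List.finRange n).flatMap fun i : Fin n => (ts i).varList).Chain' (· < ·)
  rw [List.flatMap_def]
  change List.IsChain _ _; rw [List.isChain_flatten]
  · constructor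
    · intro l hl
      obtain ⟨i, _, rfl⟩ := List.mem_map.1 hl
      exact h.1 i
    · rw [List.isChain_map, List.isChain_iff_getElem]
      intro i hi
      simp only [List.length_finRange] at hi
      rw [List.getElem_finRange, List.getElem_finRange]
      intro x hx y hy
      obtain ⟨a, b, ha, hb, hab⟩ := h.2 i
      simp only [Fin.coe_cast, ha, Option.mem_some_iff] at hx
      simp only [Fin.coe_cast, hb, Option.mem_some_iff] at hy
      subst hx hy
      exact hab
  · intro hmem
    obtain ⟨i, _, hnil'⟩ := List.mem_map.1 hmem
    have hnil : (ts (i : ℕ)).varList = [] := hnil'.symm ▸ rfl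
    exact hne i hnil

end Aux

/-- If an orderly algebra over a nonempty language is
one-to-one (on orderly terms), then it is not weakly Ramsey and hence not
Ramsey. -/
theorem injective_not_weakly_ramsey {F : ℕ → Type u} [IsEmpty (F 0)]
    [Nonempty (Σ n, F n)] {β : Type w}
    (𝒜 : Tm F → β) (h𝒜 : IsOrderlyAlg 𝒜)
    (hinj : Set.InjOn 𝒜 { t : Tm F | t.Orderly }) :
    ¬ WeaklyRamseyOA 𝒜 ∧ ¬ RamseyOA 𝒜 := by
  -- choose a function symbol of positive arity
  obtain ⟨n, f⟩ := ‹Nonempty (Σ n, F n)›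
  have hn : 0 < n := by
    rcases Nat.eq_zero_or_pos n with h | h
    · subst h; exact isEmptyElim f
    · exact h
  -- the coloring
  set T : Set (Tm F) := { t | t.Orderly ∧ Even (leftLen t) } with hT
  set X : Set β := 𝒜 '' T with hX
  have hXuniv : X ⊆ OAUniv 𝒜 := Set.image_mono (fun t ht => ht.1)
  have memX : ∀ u : Tm F, u.Orderly → (𝒜 u ∈ X ↔ Even (leftLen u)) := by
    intro u hu
    constructor
    · rintro ⟨u', ⟨hu'o, hu'e⟩, he⟩
      rwa [hinj hu'o hu he] at hu'e
    · intro he; exact ⟨u, ⟨hu, he⟩, rfl⟩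
  have key : ¬ WeaklyRamseyOA 𝒜 := by
    intro hW
    obtain ⟨ℬ, ⟨ts, hadm, hred⟩, hhom⟩ := hW X hXuniv
    -- the two terms
    have hvar0 : (Tm.var 0 : Tm F).Orderly := List.isChain_singleton _
    have hbigo : (Tm.func f (fun i : Fin n => ts i)).Orderly := orderly_func hadm f
    have hsub1 : (Tm.var 0 : Tm F).subst ts = ts 0 := rfl
    have hfuncO : (Tm.func f (fun i : Fin n => Tm.var (i : ℕ)) : Tm F).Orderly := by
      have := orderly_func (F := F) admissible_var f
      exact this
    have hsub2 : (Tm.func f (fun i : Fin n => Tm.var (i : ℕ)) : Tm F).subst ts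
        = Tm.func f (fun i : Fin n => ts i) := rfl
    have hB1 : ℬ (Tm.var 0) = 𝒜 (ts 0) := by rw [hred _ hvar0, hsub1]
    have hB2 : ℬ (Tm.func f (fun i : Fin n => Tm.var (i : ℕ)))
        = 𝒜 (Tm.func f (fun i : Fin n => ts i)) := by rw [hred _ hfuncO, hsub2]
    have hmem1 : ℬ (Tm.var 0) ∈ OAUniv ℬ := ⟨Tm.var 0, hvar0, rfl⟩
    have hmem2 : ℬ (Tm.func f (fun i : Fin n => Tm.var (i : ℕ))) ∈ OAUniv ℬ :=
      ⟨_, hfuncO, rfl⟩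
    have hlen : leftLen (Tm.func f (fun i : Fin n => ts i)) = leftLen (ts 0) + 1 := by
      show (if h : 0 < n then leftLen ((fun i : Fin n => ts i) ⟨0, h⟩) + 1 else 0) = _
      rw [dif_pos hn]
    have hX1 : 𝒜 (ts 0) ∈ X ↔ Even (leftLen (ts 0)) := memX _ (hadm.1 0)
    have hX2 : 𝒜 (Tm.func f (fun i : Fin n => ts i)) ∈ X ↔ ¬ Even (leftLen (ts 0)) := by
      rw [memX _ hbigo, hlen, Nat.even_add_one]
    rcases hhom with hsub | hdisj
    · have h1 := hX1.1 (by rw [← hB1]; exact hsub hmem1)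
      have h2 := hX2.1 (by rw [← hB2]; exact hsub hmem2)
      exact h2 h1
    · have h1 : 𝒜 (ts 0) ∉ X := fun hx => by
        have : ℬ (Tm.var 0) ∈ OAUniv ℬ ∩ X := ⟨hmem1, by rw [hB1]; exact hx⟩
        rw [hdisj] at this; exact this
      have h2 : 𝒜 (Tm.func f (fun i : Fin n => ts i)) ∉ X := fun hx => by
        have : ℬ _ ∈ OAUniv ℬ ∩ X := ⟨hmem2, by rw [hB2]; exact hx⟩
        rw [hdisj] at this; exact this
      rw [hX1] at h1
      rw [hX2, not_not] at h2
      exact h1 h2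
  refine ⟨key, fun hR => key ?_⟩
  intro X hXu
  have hself : OAReduction 𝒜 𝒜 := by
    refine ⟨fun i => Tm.var i, admissible_var, fun s _ => ?_⟩
    rw [Tm.subst_id]
  exact hR 𝒜 hself X hXu
end

section
/- Every finite Ramsey algebra is a degenerate Ramsey algebra: let L be a first-order language all of whose symbols are function symbols of arity ≥ 1, and let 𝔄 be an L-structure whose underlying set A is finite. If 𝔄 is a Ramsey algebra, then for every a : ℕ → A there exists a reduction b ≤ a such that FR(b) is a singleton. -/
open Function Set

universe u v w

section Lemmas

variable {F : ℕ → Type u} {A : Type v}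

lemma head?_flatMap {α β} {l : List α} {f : α → List β} (hf : ∀ x, f x ≠ []) {x : α}
    (hx : l.head? = some x) : (l.flatMap f).head? = (f x).head? := by
  cases l with
  | nil => simp at hx
  | cons a t =>
    rw [List.head?_cons, Option.some.injEq] at hx
    rw [List.flatMap_cons, List.head?_append_of_ne_nil _ (hf a), hx]

lemma getLast?_flatMap {α β} {f : α → List β} (hf : ∀ x, f x ≠ []) :
    ∀ {l : List α} {x : α}, l.getLast? = some x →
      (l.flatMap f).getLast? = (f x).getLast?
  | [], x, hx => by simp at hx
  | [a], x, hx => by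
      simp only [List.getLast?_singleton, Option.some.injEq] at hx
      subst hx; simp
  | a :: b :: t, x, hx => by
      rw [List.getLast?_cons_cons] at hx
      rw [List.flatMap_cons, List.getLast?_append_of_ne_nil _
        (fun hc => hf b (List.flatMap_eq_nil_iff.1 hc b (by simp))),
        getLast?_flatMap hf hx]

lemma chain'_flatMap {α β} {R : β → β → Prop} {f : α → List β} (hne : ∀ x, f x ≠ []) :
    ∀ {l : List α}, (∀ x ∈ l, (f x).Chain' R) →
      (l.Chain' fun a b => ∀ i ∈ (f a).getLast?, ∀ j ∈ (f b).head?, R i j) →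
      (l.flatMap f).Chain' R
  | [], _, _ => by simp [List.Chain']
  | [a], h1, _ => by simpa using h1 a (by simp)
  | a :: b :: t, h1, h2 => by
      simp only [List.Chain'] at h2 ⊢
      rw [List.flatMap_cons, List.isChain_append]
      refine ⟨h1 a (by simp), chain'_flatMap hne (fun x hx => h1 x (by simp [hx]))
        (h2.tail), ?_⟩
      intro x hx y hy
      have hhead : ((b :: t).flatMap f).head? = (f b).head? :=
        head?_flatMap hne (by simp)
      rw [hhead] at hy
      exact (List.isChain_cons_cons.1 h2).1 x hx y hy

lemma Tm.varList_ne_nil [IsEmpty (F 0)] (t : Tm F) : t.varList ≠ [] := by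
  induction t with
  | var i => simp [Tm.varList]
  | func f ts ih =>
    rename_i n
    cases n with
    | zero => exact isEmptyElim f
    | succ m =>
      intro h
      rw [Tm.varList, List.flatMap_eq_nil_iff] at h
      exact ih 0 (h 0 (List.mem_finRange 0))

lemma varList_subst (σ : ℕ → Tm F) (s : Tm F) :
    (s.subst σ).varList = s.varList.flatMap fun j => (σ j).varList := by
  induction s with
  | var i => simp [Tm.subst, Tm.varList]
  | func f ts ih =>
    show ((List.finRange _).flatMap fun i => ((ts i).subst σ).varList) = _
    rw [Tm.varList, List.flatMap_assoc]
    exact List.flatMap_congr fun i _ => ih i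

lemma realize_subst (I : ∀ n, F n → (Fin n → A) → A) (a : ℕ → A) (σ : ℕ → Tm F)
    (s : Tm F) : (s.subst σ).realize I a = s.realize I fun j => (σ j).realize I a := by
  induction s with
  | var i => rfl
  | func f ts ih =>
    show I _ f _ = I _ f _
    congr 1
    funext i
    exact ih i

lemma head_le_last {l : List ℕ} (h : l.Chain' (· < ·)) {x y : ℕ}
    (hx : l.head? = some x) (hy : l.getLast? = some y) : x ≤ y := by
  cases l with
  | nil => simp at hx
  | cons a t =>
    simp only [List.head?_cons, Option.some.injEq] at hx
    subst hx
    obtain ⟨hne, rfl⟩ := List.mem_getLast?_eq_getLast hy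
    have hmem := List.getLast_mem hne
    simp only [List.Chain'] at h
    rw [List.isChain_iff_pairwise] at h
    rcases List.mem_cons.1 hmem with h' | h'
    · omega
    · exact le_of_lt ((List.pairwise_cons.1 h).1 _ h')

lemma admissible_mono {ts : ℕ → Tm F} (h : Tm.Admissible ts) :
    ∀ i j, i < j → Tm.TermLT (ts i) (ts j) := by
  intro i j hij
  induction j with
  | zero => omega
  | succ k ih =>
    rcases Nat.lt_succ_iff_lt_or_eq.1 hij with h' | h'
    · obtain ⟨x, y, hx, hy, hxy⟩ := ih h'
      obtain ⟨x', y', hx', hy', hxy'⟩ := h.2 k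
      exact ⟨x, y', hx, hy', lt_of_lt_of_le (lt_of_lt_of_le hxy
        (head_le_last (h.1 k) hy hx')) (le_of_lt hxy')⟩
    · subst h'; exact h.2 i

lemma orderly_subst [IsEmpty (F 0)] {σ : ℕ → Tm F} (hσ : Tm.Admissible σ)
    {s : Tm F} (hs : s.Orderly) : (s.subst σ).Orderly := by
  rw [Tm.Orderly, varList_subst]
  refine chain'_flatMap (fun j => Tm.varList_ne_nil (σ j))
    (fun j _ => hσ.1 j) (hs.imp ?_)
  intro p q hpq x hx y hy
  obtain ⟨x', y', hx', hy', hxy'⟩ := admissible_mono hσ p q hpq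
  rw [Option.mem_def, hx'] at hx
  rw [Option.mem_def, hy'] at hy
  cases hx; cases hy; exact hxy'

lemma termLT_subst [IsEmpty (F 0)] {σ : ℕ → Tm F} (hσ : Tm.Admissible σ)
    {s s' : Tm F} (h : Tm.TermLT s s') : Tm.TermLT (s.subst σ) (s'.subst σ) := by
  obtain ⟨i, j, hi, hj, hij⟩ := h
  obtain ⟨x, y, hx, hy, hxy⟩ := admissible_mono hσ i j hij
  refine ⟨x, y, ?_, ?_, hxy⟩
  · rw [varList_subst, getLast?_flatMap (fun j => Tm.varList_ne_nil (σ j)) hi, hx]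
  · rw [varList_subst, head?_flatMap (fun j => Tm.varList_ne_nil (σ j)) hj, hy]

lemma admissible_subst [IsEmpty (F 0)] {σ ss : ℕ → Tm F} (hσ : Tm.Admissible σ)
    (hss : Tm.Admissible ss) : Tm.Admissible fun i => (ss i).subst σ :=
  ⟨fun i => orderly_subst hσ (hss.1 i), fun i => termLT_subst hσ (hss.2 i)⟩

end Lemmas

section Main

variable {F : ℕ → Type u} {A : Type v}

lemma seqReduction_trans [IsEmpty (F 0)] {I : ∀ n, F n → (Fin n → A) → A}
    {a b c : ℕ → A} (hcb : SeqReduction I c b) (hba : SeqReduction I b a) :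
    SeqReduction I c a := by
  obtain ⟨ss, hss, hc⟩ := hcb
  obtain ⟨ts, hts, hb⟩ := hba
  refine ⟨fun i => (ss i).subst ts, admissible_subst hts hss, fun i => ?_⟩
  rw [hc i, realize_subst]
  congr 1
  funext j
  exact hb j

lemma fr_subset [IsEmpty (F 0)] {I : ∀ n, F n → (Fin n → A) → A}
    {a b : ℕ → A} (hba : SeqReduction I b a) : FR I b ⊆ FR I a := by
  rintro x ⟨t, ht, rfl⟩
  obtain ⟨ts, hts, hb⟩ := hba
  refine ⟨t.subst ts, orderly_subst hts ht, ?_⟩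
  rw [realize_subst]
  congr 1
  funext j
  exact hb j

lemma self_mem_fr {I : ∀ n, F n → (Fin n → A) → A} (a : ℕ → A) : a 0 ∈ FR I a :=
  ⟨.var 0, by simp [Tm.Orderly, Tm.varList, List.Chain'], rfl⟩

lemma seqReduction_refl {I : ∀ n, F n → (Fin n → A) → A} (a : ℕ → A) :
    SeqReduction I a a := by
  refine ⟨fun i => .var i, ⟨fun i => by simp [Tm.Orderly, Tm.varList, List.Chain'],
    fun i => ⟨i, i + 1, by simp [Tm.varList]⟩⟩, fun i => rfl⟩

lemma main_aux [IsEmpty (F 0)] {I : ∀ n, F n → (Fin n → A) → A} (hR : RamseyAlg I)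
    [DecidableEq A] :
    ∀ (n : ℕ) (S : Finset A), S.card ≤ n → ∀ a : ℕ → A, FR I a ⊆ ↑S →
      ∃ b, SeqReduction I b a ∧ ∃ x : A, FR I b = {x} := by
  intro n
  induction n with
  | zero =>
    intro S hS a ha
    have := ha (self_mem_fr a)
    rw [Nat.le_zero, Finset.card_eq_zero] at hS
    simp [hS] at this
  | succ m ih =>
    intro S hS a ha
    set x := a 0 with hx
    have hxS : x ∈ S := ha (self_mem_fr a)
    obtain ⟨b, hba, hcase⟩ := hR a {x}
    rcases hcase with h | h
    · refine ⟨b, hba, x, ?_⟩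
      have hb0 : b 0 ∈ FR I b := self_mem_fr b
      exact Set.Subset.antisymm h (by
        have := h hb0
        simp only [Set.mem_singleton_iff] at this
        rw [← this]
        exact Set.singleton_subset_iff.2 hb0)
    · have hsub : FR I b ⊆ ↑(S.erase x) := by
        intro y hy
        have hyS : y ∈ S := ha (fr_subset hba hy)
        have hne : y ≠ x := by
          intro hyx
          have : y ∈ FR I b ∩ {x} := ⟨hy, by simp [hyx]⟩
          rw [h] at this
          exact this
        exact Finset.mem_coe.2 (Finset.mem_erase.2 ⟨hne, hyS⟩)
      have hcard : (S.erase x).card ≤ m := by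
        have := Finset.card_erase_of_mem hxS
        omega
      obtain ⟨c, hcb, hsing⟩ := ih (S.erase x) hcard b hsub
      exact ⟨c, seqReduction_trans hcb hba, hsing⟩

end Main


/-- Every finite Ramsey algebra is a degenerate Ramsey
algebra: every sequence has a reduction whose set of finite reductions is a
singleton. -/
theorem finite_ramsey_degenerate {F : ℕ → Type u} [IsEmpty (F 0)] {A : Type v}
    [Finite A] (I : ∀ n, F n → (Fin n → A) → A) (hR : RamseyAlg I)
    (a : ℕ → A) :
    ∃ b, SeqReduction I b a ∧ ∃ x : A, FR I b = {x} := by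
  have : Fintype A := Fintype.ofFinite A
  classical
  exact main_aux hR (Finset.univ.card) Finset.univ le_rfl a (by simp)
end
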